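/- A finite simple graph G has a fractional perfect matching if and only if for every subset S of V(G), the number of isolated vertices of G − S is at most |S|. -/
import Mathlib


open Finset

namespace SCF

variable {V : Type*}

/-- Degree of `v` in `F` (as the cardinality of its neighbor set). -/
noncomputable def deg [Fintype V] (F : SimpleGraph V) (v : V) : ℕ :=
  (F.neighborSet v).ncard

/-- Number of isolated vertices of `G - S`. -/
noncomputable def iso [Fintype V] (G : SimpleGraph V) (S : Set V) : ℕ :=
  {v | v ∉ S ∧ ∀ w, G.Adj v w → w ∈ S}.ncard

/-- The component of `v` in `F` is a single edge `K_{1,1}`. -/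
def IsK11Comp [Fintype V] (F : SimpleGraph V) (v : V) : Prop :=
  deg F v = 1 ∧ ∀ w, F.Adj v w → deg F w = 1

/-- The component of `v` in `F` is a path on three vertices `K_{1,2}`. -/
def IsK12Comp [Fintype V] (F : SimpleGraph V) (v : V) : Prop :=
  ∃ c a b, a ≠ b ∧ F.Adj c a ∧ F.Adj c b ∧ deg F c = 2 ∧ deg F a = 1 ∧ deg F b = 1 ∧
    (v = c ∨ v = a ∨ v = b)

/-- The component of `v` in `F` is a cycle (2-regular connected, so length ≥ 3). -/
def IsCycleComp [Fintype V] (F : SimpleGraph V) (v : V) : Prop :=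
  ∀ w, F.Reachable v w → deg F w = 2

/-- The component of `v` in `F` is an odd cycle. -/
def IsOddCycleComp [Fintype V] (F : SimpleGraph V) (v : V) : Prop :=
  IsCycleComp F v ∧ Odd {w | F.Reachable v w}.ncard

/-- The component of `v` in `F` is a star `K_{1,i}` for some `i ≥ 1`. -/
def IsStarComp [Fintype V] (F : SimpleGraph V) (v : V) : Prop :=
  ∃ c, (v = c ∨ F.Adj c v) ∧ 0 < deg F c ∧ ∀ w, F.Adj c w → deg F w = 1

/-- The component of `v` in `F` is a star `K_{1,i}` with `1 ≤ i ≤ n`. -/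
def IsStarAtMostComp [Fintype V] (F : SimpleGraph V) (n : ℕ) (v : V) : Prop :=
  ∃ c, (v = c ∨ F.Adj c v) ∧ 0 < deg F c ∧ deg F c ≤ n ∧ ∀ w, F.Adj c w → deg F w = 1

/-- `F` is a `{K_{1,1}, C_m : m ≥ 3}`-factor of `G`. -/
def IsK11CycleFactor [Fintype V] (G F : SimpleGraph V) : Prop :=
  F ≤ G ∧ ∀ v, IsK11Comp F v ∨ IsCycleComp F v

/-- `F` is a `{K_{1,1}, K_{1,2}, C_m : m ≥ 3}`-factor of `G`. -/
def IsK11K12CycleFactor [Fintype V] (G F : SimpleGraph V) : Prop :=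
  F ≤ G ∧ ∀ v, IsK11Comp F v ∨ IsK12Comp F v ∨ IsCycleComp F v

/-- Number of `K_{1,2}`-components of `F`, counted by their centers. -/
noncomputable def countK12 [Fintype V] (F : SimpleGraph V) : ℕ :=
  {v | deg F v = 2 ∧ ∀ w, F.Adj v w → deg F w = 1}.ncard

/-- `min(G, K_{1,2})`: the minimum number of `K_{1,2}`-components over all
`{K_{1,1}, K_{1,2}, C_m : m ≥ 3}`-factors of `G`. -/
noncomputable def minK12 [Fintype V] (G : SimpleGraph V) : ℕ :=
  sInf {t | ∃ F, IsK11K12CycleFactor G F ∧ countK12 F = t}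

/-- `f` is a fractional matching of `G`. -/
def IsFracMatching [Fintype V] [DecidableEq V] (G : SimpleGraph V) [DecidableRel G.Adj]
    (f : Sym2 V → ℝ) : Prop :=
  (∀ e, 0 ≤ f e ∧ f e ≤ 1) ∧ (∀ e, e ∉ G.edgeSet → f e = 0) ∧
    ∀ v : V, ∑ e ∈ G.edgeFinset, (if v ∈ e then f e else 0) ≤ 1

/-- Total weight of a fractional matching. -/
def weight [Fintype V] [DecidableEq V] (G : SimpleGraph V) [DecidableRel G.Adj]
    (f : Sym2 V → ℝ) : ℝ :=
  ∑ e ∈ G.edgeFinset, f e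

/-- The fractional matching number `μ_f(G)`. -/
noncomputable def nuF [Fintype V] [DecidableEq V] (G : SimpleGraph V) [DecidableRel G.Adj] : ℝ :=
  sSup (weight G '' {f | IsFracMatching G f})

/-- `f` is a maximum fractional matching of `G`. -/
def IsMaxFracMatching [Fintype V] [DecidableEq V] (G : SimpleGraph V) [DecidableRel G.Adj]
    (f : Sym2 V → ℝ) : Prop :=
  IsFracMatching G f ∧ weight G f = nuF G

/-- `s` is an independent set of vertices of `G`. -/
def IsIndepSet (G : SimpleGraph V) (s : Set V) : Prop :=
  ∀ ⦃u⦄, u ∈ s → ∀ ⦃w⦄, w ∈ s → ¬ G.Adj u w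

/-- The independence number `α(G)`. -/
noncomputable def alpha [Fintype V] (G : SimpleGraph V) : ℕ :=
  sSup {n | ∃ s : Set V, IsIndepSet G s ∧ s.ncard = n}

/-- `G` has a proper edge coloring with `k` colors. -/
def HasProperEdgeColoring (G : SimpleGraph V) (k : ℕ) : Prop :=
  ∃ c : Sym2 V → Fin k, ∀ e₁ ∈ G.edgeSet, ∀ e₂ ∈ G.edgeSet,
    e₁ ≠ e₂ → ∀ v : V, v ∈ e₁ → v ∈ e₂ → c e₁ ≠ c e₂

/-- The chromatic index `χ'(G)`: the minimum number of colors (equivalently matchings)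
needed to properly color the edges of `G`. -/
noncomputable def chromIdx (G : SimpleGraph V) : ℕ :=
  sInf {k | HasProperEdgeColoring G k}

/-- `G` is a `k`-critical graph. -/
def IsCriticalWith [Fintype V] (G : SimpleGraph V) [DecidableRel G.Adj] (k : ℕ) : Prop :=
  2 ≤ k ∧ G.maxDegree = k ∧ chromIdx G = k + 1 ∧
    ∀ H : SimpleGraph V, H < G → chromIdx H ≤ k

/-- `G` is an edge-chromatic critical graph. -/
def IsCritical [Fintype V] (G : SimpleGraph V) [DecidableRel G.Adj] : Prop :=
  ∃ k, IsCriticalWith G k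

/-- `G` is factor-critical: deleting any vertex leaves a graph with a perfect matching. -/
def IsFactorCritical (G : SimpleGraph V) : Prop :=
  ∀ v : V, ∃ M : G.Subgraph, M.verts = {v}ᶜ ∧ M.IsMatching

end SCF

open SCF

section AuxStmt2

open Finset in
private lemma sum_ite_or_aux {V : Type*} [Fintype V] [DecidableEq V] {a b : V} (hab : a ≠ b)
    (c : ℝ) : ∑ v : V, (if v = a ∨ v = b then c else 0) = 2 * c := by
  have h : ∀ v : V, (if v = a ∨ v = b then c else 0)
      = (if v = a then c else 0) + (if v = b then c else 0) := by
    intro v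
    by_cases h1 : v = a <;> by_cases h2 : v = b <;> simp_all
  rw [Finset.sum_congr rfl fun v _ => h v, Finset.sum_add_distrib,
    Finset.sum_ite_eq' Finset.univ a fun _ => c, Finset.sum_ite_eq' Finset.univ b fun _ => c]
  simp; ring

open Finset in
private lemma edge_cmp_left {V : Type*} [Fintype V] [DecidableEq V] {S : Set V} {c : ℝ}
    (hc : 0 ≤ c) {a b : V} {FI FS : Finset V}
    (hFIS : ∀ v ∈ FI, v ∉ S) (hbFS : b ∈ FS) (hbS : b ∈ S) :
    (∑ v ∈ FI, if v ∈ s(a,b) then c else 0) ≤ ∑ v ∈ FS, if v ∈ s(a,b) then c else 0 := by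
  calc ∑ v ∈ FI, (if v ∈ s(a,b) then c else 0)
      ≤ ∑ v ∈ FI, (if v = a then c else 0) := by
        apply Finset.sum_le_sum
        intro v hv
        by_cases hva : v = a
        · simp [hva, Sym2.mem_iff]
        · have hvn : v ∉ s(a,b) := by
            rw [Sym2.mem_iff]
            rintro (rfl | rfl)
            · exact hva rfl
            · exact hFIS _ hv hbS
          simp [hvn, hva]
    _ ≤ c := by
        rw [Finset.sum_ite_eq' FI a fun _ => c]
        split <;> simp [hc]
    _ ≤ ∑ v ∈ FS, (if v ∈ s(a,b) then c else 0) := by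
        have hm : (if b ∈ s(a,b) then c else 0) = c := by simp
        calc c = (if b ∈ s(a,b) then c else 0) := hm.symm
          _ ≤ _ := Finset.single_le_sum
              (f := fun v => if v ∈ s(a,b) then c else 0)
              (fun i _ => by by_cases h : i ∈ s(a,b) <;> simp [h, hc]) hbFS

open Finset in
private lemma edge_cmp {V : Type*} [Fintype V] [DecidableEq V] {G : SimpleGraph V} {S : Set V}
    {c : ℝ} (hc : 0 ≤ c) {a b : V} (hadj : G.Adj a b) {FI FS : Finset V}
    (hFI : ∀ v, v ∈ FI ↔ (v ∉ S ∧ ∀ w, G.Adj v w → w ∈ S))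
    (hFS : ∀ v, v ∈ FS ↔ v ∈ S) :
    (∑ v ∈ FI, if v ∈ s(a,b) then c else 0) ≤ ∑ v ∈ FS, if v ∈ s(a,b) then c else 0 := by
  by_cases ha : a ∈ FI
  · have hbS : b ∈ S := ((hFI a).1 ha).2 b hadj
    exact edge_cmp_left hc (fun v hv => ((hFI v).1 hv).1) ((hFS b).2 hbS) hbS
  · by_cases hb : b ∈ FI
    · have haS : a ∈ S := ((hFI b).1 hb).2 a hadj.symm
      rw [Sym2.eq_swap]
      exact edge_cmp_left hc (fun v hv => ((hFI v).1 hv).1) ((hFS a).2 haS) haS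
    · have h0 : (∑ v ∈ FI, if v ∈ s(a,b) then c else 0) = 0 := by
        apply Finset.sum_eq_zero
        intro v hv
        rw [if_neg]
        rw [Sym2.mem_iff]
        rintro (rfl | rfl)
        · exact ha hv
        · exact hb hv
      rw [h0]
      exact Finset.sum_nonneg fun v _ => by split <;> simp [hc]

end AuxStmt2
/-- `G` has a fractional perfect matching iff `iso(G-S) ≤ |S|` for all `S`. -/
theorem stmt2 {V : Type*} [Fintype V] [DecidableEq V] (G : SimpleGraph V)
    [DecidableRel G.Adj] :
    (∃ f : Sym2 V → ℝ, IsFracMatching G f ∧ weight G f = (Fintype.card V : ℝ) / 2) ↔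
      ∀ S : Set V, iso G S ≤ S.ncard := by
  classical
  constructor
  · rintro ⟨f, ⟨hf01, hfsupp, hfdeg⟩, hw⟩ S
    -- Every vertex sum equals 1.
    have hedge : ∀ e ∈ G.edgeFinset, (∑ v : V, if v ∈ e then f e else 0) = 2 * f e := by
      intro e he
      rw [SimpleGraph.mem_edgeFinset] at he
      induction e using Sym2.ind with
      | _ a b =>
        have hadj : G.Adj a b := he
        have h : ∀ v : V, ((if v ∈ s(a,b) then f s(a,b) else 0)
            = if v = a ∨ v = b then f s(a,b) else 0) := by
          intro v
          simp only [Sym2.mem_iff]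
        rw [Finset.sum_congr rfl fun v _ => h v]
        exact sum_ite_or_aux hadj.ne (f s(a,b))
    have hsum : ∑ v : V, ∑ e ∈ G.edgeFinset, (if v ∈ e then f e else 0)
        = (Fintype.card V : ℝ) := by
      rw [Finset.sum_comm, Finset.sum_congr rfl hedge, ← Finset.mul_sum]
      have hwe : ∑ e ∈ G.edgeFinset, f e = weight G f := rfl
      rw [hwe, hw]
      ring
    have hv1 : ∀ v : V, (∑ e ∈ G.edgeFinset, if v ∈ e then f e else 0) = 1 := by
      by_contra hc
      push_neg at hc
      obtain ⟨v0, hv0⟩ := hc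
      have hlt : (∑ e ∈ G.edgeFinset, if v0 ∈ e then f e else 0) < 1 :=
        lt_of_le_of_ne (hfdeg v0) hv0
      have hslt : ∑ v : V, (∑ e ∈ G.edgeFinset, if v ∈ e then f e else 0)
          < ∑ _v : V, (1:ℝ) :=
        Finset.sum_lt_sum (fun i _ => hfdeg i) ⟨v0, Finset.mem_univ v0, hlt⟩
      rw [hsum] at hslt
      simp at hslt
    have hIfin : ({v | v ∉ S ∧ ∀ w, G.Adj v w → w ∈ S} : Set V).Finite := Set.toFinite _
    have hSfin : S.Finite := S.toFinite
    have key : ∀ e ∈ G.edgeFinset,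
        (∑ v ∈ hIfin.toFinset, if v ∈ e then f e else 0)
          ≤ ∑ v ∈ hSfin.toFinset, if v ∈ e then f e else 0 := by
      intro e he
      rw [SimpleGraph.mem_edgeFinset] at he
      induction e using Sym2.ind with
      | _ a b =>
        exact edge_cmp (hf01 _).1 he (fun v => hIfin.mem_toFinset)
          (fun v => hSfin.mem_toFinset)
    have chain : (hIfin.toFinset.card : ℝ) ≤ (hSfin.toFinset.card : ℝ) := by
      calc (hIfin.toFinset.card : ℝ)
          = ∑ _v ∈ hIfin.toFinset, (1:ℝ) := by
            rw [Finset.sum_const, nsmul_eq_mul, mul_one]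
        _ = ∑ v ∈ hIfin.toFinset, ∑ e ∈ G.edgeFinset, (if v ∈ e then f e else 0) :=
            Finset.sum_congr rfl fun v _ => (hv1 v).symm
        _ = ∑ e ∈ G.edgeFinset, ∑ v ∈ hIfin.toFinset, (if v ∈ e then f e else 0) :=
            Finset.sum_comm
        _ ≤ ∑ e ∈ G.edgeFinset, ∑ v ∈ hSfin.toFinset, (if v ∈ e then f e else 0) :=
            Finset.sum_le_sum key
        _ = ∑ v ∈ hSfin.toFinset, ∑ e ∈ G.edgeFinset, (if v ∈ e then f e else 0) :=
            Finset.sum_comm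
        _ = ∑ _v ∈ hSfin.toFinset, (1:ℝ) := Finset.sum_congr rfl fun v _ => hv1 v
        _ = (hSfin.toFinset.card : ℝ) := by
            rw [Finset.sum_const, nsmul_eq_mul, mul_one]
    have hnat : hIfin.toFinset.card ≤ hSfin.toFinset.card := by exact_mod_cast chain
    have e1 : iso G S = hIfin.toFinset.card := Set.ncard_eq_toFinset_card _ hIfin
    have e2 : S.ncard = hSfin.toFinset.card := Set.ncard_eq_toFinset_card _ hSfin
    rw [e1, e2]
    exact hnat
  · intro hiso
    -- Hall's condition for the neighborhood function.
    have hall : ∀ A : Finset V, A.card ≤ (A.biUnion fun v => G.neighborFinset v).card := by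
      intro A
      set N := A.biUnion fun v => G.neighborFinset v with hN
      set S : Set V := ((N \ A : Finset V) : Set V) with hS
      have hsub : ∀ v ∈ A \ N, v ∈ {u | u ∉ S ∧ ∀ w, G.Adj u w → w ∈ S} := by
        intro v hv
        rw [Finset.mem_sdiff] at hv
        obtain ⟨hvA, hvN⟩ := hv
        constructor
        · intro hvS
          rw [hS, Finset.mem_coe, Finset.mem_sdiff] at hvS
          exact hvS.2 hvA
        · intro w hw
          rw [hS, Finset.mem_coe, Finset.mem_sdiff]
          refine ⟨Finset.mem_biUnion.2 ⟨v, hvA, (G.mem_neighborFinset v w).2 hw⟩, ?_⟩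
          intro hwA
          exact hvN (Finset.mem_biUnion.2 ⟨w, hwA, (G.mem_neighborFinset w v).2 hw.symm⟩)
      have h2 : ((A \ N : Finset V) : Set V).ncard
          ≤ ({u | u ∉ S ∧ ∀ w, G.Adj u w → w ∈ S} : Set V).ncard :=
        Set.ncard_le_ncard (fun v hv => hsub v (Finset.mem_coe.1 hv)) (Set.toFinite _)
      have h3 : iso G S ≤ S.ncard := hiso S
      have h4 : iso G S = ({u | u ∉ S ∧ ∀ w, G.Adj u w → w ∈ S} : Set V).ncard := rfl
      rw [h4] at h3
      rw [Set.ncard_coe_finset] at h2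
      rw [hS, Set.ncard_coe_finset] at h3
      have h5 : (A \ N).card ≤ (N \ A).card := h2.trans h3
      have h6 := Finset.card_sdiff_add_card_inter A N
      have h7 := Finset.card_sdiff_add_card_inter N A
      rw [Finset.inter_comm] at h7
      omega
    obtain ⟨σ, hσinj, hσ⟩ :=
      (Finset.all_card_le_biUnion_card_iff_exists_injective
        (fun v => G.neighborFinset v)).1 hall
    have hadj : ∀ v, G.Adj v (σ v) := fun v => (G.mem_neighborFinset v (σ v)).1 (hσ v)
    have hσsurj : Function.Surjective σ := (Finite.injective_iff_bijective.1 hσinj).2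
    have hmemE : ∀ w : V, s(w, σ w) ∈ G.edgeFinset := by
      intro w
      rw [SimpleGraph.mem_edgeFinset]
      exact hadj w
    refine ⟨fun e => ∑ w : V, if s(w, σ w) = e then (1:ℝ)/2 else 0, ⟨?_, ?_, ?_⟩, ?_⟩
    · intro e
      constructor
      · exact Finset.sum_nonneg fun w _ => by split <;> norm_num
      · induction e using Sym2.ind with
        | _ a b =>
          have hsub2 : (Finset.univ.filter fun w => s(w, σ w) = s(a,b))
              ⊆ ({a, b} : Finset V) := by
            intro w hw
            rw [Finset.mem_filter] at hw
            have hmem : w ∈ s(a,b) := hw.2 ▸ Sym2.mem_mk_left w (σ w)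
            rw [Sym2.mem_iff] at hmem
            simpa [Finset.mem_insert, Finset.mem_singleton] using hmem
          have hcard : (Finset.univ.filter fun w => s(w, σ w) = s(a,b)).card ≤ 2 :=
            le_trans (Finset.card_le_card hsub2)
              ((Finset.card_insert_le a {b}).trans (by simp))
          calc (∑ w : V, if s(w, σ w) = s(a,b) then (1:ℝ)/2 else 0)
              = ∑ w ∈ Finset.univ.filter (fun w => s(w, σ w) = s(a,b)), (1:ℝ)/2 := by
                rw [Finset.sum_filter]
            _ = (Finset.univ.filter fun w => s(w, σ w) = s(a,b)).card * ((1:ℝ)/2) := by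
                rw [Finset.sum_const, nsmul_eq_mul]
            _ ≤ 2 * ((1:ℝ)/2) := by
                have h2r : ((Finset.univ.filter fun w => s(w, σ w) = s(a,b)).card : ℝ) ≤ 2 := by
                  exact_mod_cast hcard
                nlinarith
            _ = 1 := by norm_num
    · intro e he
      apply Finset.sum_eq_zero
      intro w _
      rw [if_neg]
      intro h
      exact he (h ▸ (G.mem_edgeSet.2 (hadj w)))
    · intro v
      have hveq : (∑ e ∈ G.edgeFinset,
          if v ∈ e then (∑ w : V, if s(w, σ w) = e then (1:ℝ)/2 else 0) else 0) = 1 := by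
        have step1 : ∀ e ∈ G.edgeFinset,
            (if v ∈ e then (∑ w : V, if s(w, σ w) = e then (1:ℝ)/2 else 0) else 0)
              = ∑ w : V, if s(w, σ w) = e ∧ v ∈ e then (1:ℝ)/2 else 0 := by
          intro e _
          by_cases hv : v ∈ e
          · rw [if_pos hv]
            exact Finset.sum_congr rfl fun w _ => (if_congr (and_iff_left hv) rfl rfl).symm
          · rw [if_neg hv]
            exact (Finset.sum_eq_zero fun w _ => by
              rw [if_neg (fun h => hv h.2)]).symm
        rw [Finset.sum_congr rfl step1, Finset.sum_comm]
        have step2 : ∀ w : V,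
            (∑ e ∈ G.edgeFinset, if s(w, σ w) = e ∧ v ∈ e then (1:ℝ)/2 else 0)
              = if v ∈ s(w, σ w) then (1:ℝ)/2 else 0 := by
          intro w
          have hcongr : ∀ e ∈ G.edgeFinset,
              (if s(w, σ w) = e ∧ v ∈ e then (1:ℝ)/2 else 0)
                = if s(w, σ w) = e then (if v ∈ s(w, σ w) then (1:ℝ)/2 else 0) else 0 := by
            intro e _
            by_cases h : s(w, σ w) = e
            · subst h; simp
            · simp [h]
          rw [Finset.sum_congr rfl hcongr,
            Finset.sum_ite_eq G.edgeFinset (s(w, σ w)) _, if_pos (hmemE w)]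
        rw [Finset.sum_congr rfl fun w _ => step2 w]
        obtain ⟨w0, hw0⟩ := hσsurj v
        have hw0v : v ≠ w0 := by
          rintro rfl
          exact G.irrefl (hw0 ▸ hadj v)
        have hcond : ∀ w : V, (v ∈ s(w, σ w)) ↔ (w = v ∨ w = w0) := by
          intro w
          rw [Sym2.mem_iff]
          constructor
          · rintro (rfl | h)
            · exact Or.inl rfl
            · exact Or.inr (hσinj (hw0.trans h)).symm
          · rintro (rfl | rfl)
            · exact Or.inl rfl
            · exact Or.inr hw0.symm
        rw [Finset.sum_congr rfl fun w _ => if_congr (hcond w) rfl rfl]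
        rw [sum_ite_or_aux hw0v ((1:ℝ)/2)]
        norm_num
      exact le_of_eq hveq
    · show (∑ e ∈ G.edgeFinset, ∑ w : V, if s(w, σ w) = e then (1:ℝ)/2 else 0)
        = (Fintype.card V : ℝ) / 2
      rw [Finset.sum_comm]
      have hrow : ∀ w : V,
          (∑ e ∈ G.edgeFinset, if s(w, σ w) = e then (1:ℝ)/2 else 0) = 1/2 := by
        intro w
        rw [Finset.sum_ite_eq G.edgeFinset (s(w, σ w)) fun _ => (1:ℝ)/2, if_pos (hmemE w)]
      rw [Finset.sum_congr rfl fun w _ => hrow w, Finset.sum_const, Finset.card_univ,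
        nsmul_eq_mul]
      ring
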